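/- arXiv:2504.09269 — 3 statements merged into one kernel-verified Lean document; each statement's English description precedes it below -/
import Mathlib

section
/- Let ε_∞ > 0, a ≥ 0, and E_x, E_y ∈ ℝ. The 2×2 symmetric matrix M with M₁₁ = ε_∞ + a(3E_x² + E_y²), M₂₂ = ε_∞ + a(E_x² + 3E_y²), M₁₂ = M₂₁ = 2a·E_x·E_y is positive definite. -/
theorem stmt_2 (εinf a Ex Ey : ℝ) (hε : 0 < εinf) (ha : 0 ≤ a) :
    (!![εinf + a * (3 * Ex ^ 2 + Ey ^ 2), 2 * a * Ex * Ey;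
       2 * a * Ex * Ey, εinf + a * (Ex ^ 2 + 3 * Ey ^ 2)] :
      Matrix (Fin 2) (Fin 2) ℝ).PosDef := by
  constructor
  · ext i j
    fin_cases i <;> fin_cases j <;>
      simp [Matrix.conjTranspose_apply, Matrix.transpose_apply]
  · intro x hx
    have hx0 : x 0 ≠ 0 ∨ x 1 ≠ 0 := by
      by_contra h
      push_neg at h
      apply hx
      ext i; fin_cases i <;> simp [h.1, h.2]
    have h1 : 0 < x 0 ^ 2 + x 1 ^ 2 := by
      rcases hx0 with h | h <;> positivity
    simp only [dotProduct, Matrix.mulVec, Fin.sum_univ_two, Finsupp.sum_fintype, zero_mul,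
      mul_zero, add_zero, star_zero, implies_true,
      Matrix.cons_val', Matrix.cons_val_zero, Matrix.cons_val_one,
      Matrix.head_cons, Matrix.empty_val', Matrix.cons_val_fin_one,
      Matrix.head_fin_const, Matrix.of_apply, Pi.star_apply, star_trivial, RCLike.re_to_real]
    nlinarith [sq_nonneg (Ex * x 0 + Ey * x 1), sq_nonneg (x 0), sq_nonneg (x 1),
      mul_nonneg ha (sq_nonneg (Ex * x 0 + Ey * x 1)),
      mul_nonneg ha (mul_nonneg (add_nonneg (sq_nonneg Ex) (sq_nonneg Ey)) h1.le)]
end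

section
/- Let E : ℝ → ℝ^{N+1} be differentiable, φ_k = Σ_{p=0}^{k} E_p E_{k-p}, and ψ_k = Σ_{p=0}^{k} E_p φ_{k-p}. Then for each k, ψ_k' = 3 E_k' φ_0 + Σ_{p=0}^{k-1} ( E_p' φ_{k-p} + (φ_p' + 2 E_p' E_0) E_{k-p} ), where φ_0 = E_0². -/
private lemma dsum_mul (E F : ℕ → ℝ → ℝ) (t : ℝ) (n : ℕ)
    (hE : ∀ p, Differentiable ℝ (E p)) (hF : ∀ p, Differentiable ℝ (F p)) :
    deriv (fun s => ∑ p ∈ Finset.range n, E p s * F p s) t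
      = ∑ p ∈ Finset.range n, (deriv (E p) t * F p t + E p t * deriv (F p) t) := by
  rw [deriv_fun_sum (A := fun p s => E p s * F p s) fun p _ => ((hE p t).mul (hF p t))]
  exact Finset.sum_congr rfl fun p _ => deriv_fun_mul (hE p t) (hF p t)

theorem stmt_7 (N : ℕ) (E : ℕ → ℝ → ℝ) (hE : ∀ p, Differentiable ℝ (E p))
    (k : ℕ) (hk : k ≤ N) (t : ℝ) :
    let φ : ℕ → ℝ → ℝ := fun j s => ∑ p ∈ Finset.range (j + 1), E p s * E (j - p) s
    deriv (fun s => ∑ p ∈ Finset.range (k + 1), E p s * φ (k - p) s) t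
      = 3 * deriv (E k) t * φ 0 t
        + ∑ p ∈ Finset.range k,
            (deriv (E p) t * φ (k - p) t
              + (deriv (φ p) t + 2 * deriv (E p) t * E 0 t) * E (k - p) t) := by
  intro φ
  have hφ : ∀ j, Differentiable ℝ (φ j) := fun j =>
    Differentiable.fun_sum fun p _ => (hE p).mul (hE (j - p))
  -- derivative of φ j at t
  have hd : ∀ j, deriv (φ j) t
      = ∑ p ∈ Finset.range (j + 1),
          (deriv (E p) t * E (j - p) t + E p t * deriv (E (j - p)) t) :=
    fun j => dsum_mul E (fun p => E (j - p)) t (j + 1) hE (fun p => hE (j - p))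
  -- reflection identity
  have hrefl : ∀ j, ∑ p ∈ Finset.range (j + 1), E p t * deriv (E (j - p)) t
      = ∑ p ∈ Finset.range (j + 1), deriv (E p) t * E (j - p) t := by
    intro j
    rw [← Finset.sum_range_reflect (fun p => deriv (E p) t * E (j - p) t) (j + 1)]
    refine Finset.sum_congr rfl fun p hp => ?_
    have hp' : p ≤ j := Nat.lt_succ_iff.mp (Finset.mem_range.mp hp)
    have h1 : j + 1 - 1 - p = j - p := by omega
    have h2 : j - (j - p) = p := by omega
    rw [h1, h2, mul_comm]
  have hd2 : ∀ j, deriv (φ j) t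
      = 2 * ∑ p ∈ Finset.range (j + 1), deriv (E p) t * E (j - p) t := by
    intro j
    rw [hd j, Finset.sum_add_distrib, hrefl j, two_mul]
  have hφ0 : φ 0 t = E 0 t * E 0 t := by
    show (∑ p ∈ Finset.range 1, E p t * E (0 - p) t) = E 0 t * E 0 t
    simp
  -- derivative of the LHS
  have hmain : deriv (fun s => ∑ p ∈ Finset.range (k + 1), E p s * φ (k - p) s) t
      = ∑ p ∈ Finset.range (k + 1),
          (deriv (E p) t * φ (k - p) t + E p t * deriv (φ (k - p)) t) :=
    dsum_mul E (fun p => φ (k - p)) t (k + 1) hE (fun p => hφ (k - p))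
  rw [hmain, Finset.sum_add_distrib]
  -- reflect the second sum
  have hrefl2 : ∑ p ∈ Finset.range (k + 1), E p t * deriv (φ (k - p)) t
      = ∑ p ∈ Finset.range (k + 1), deriv (φ p) t * E (k - p) t := by
    rw [← Finset.sum_range_reflect (fun p => deriv (φ p) t * E (k - p) t) (k + 1)]
    refine Finset.sum_congr rfl fun p hp => ?_
    have hp' : p ≤ k := Nat.lt_succ_iff.mp (Finset.mem_range.mp hp)
    have h1 : k + 1 - 1 - p = k - p := by omega
    have h2 : k - (k - p) = p := by omega
    rw [h1, h2, mul_comm]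
  rw [hrefl2]
  rw [Finset.sum_range_succ (fun p => deriv (E p) t * φ (k - p) t) k,
      Finset.sum_range_succ (fun p => deriv (φ p) t * E (k - p) t) k]
  simp only [Nat.sub_self]
  rw [hd2 k, Finset.sum_range_succ (fun p => deriv (E p) t * E (k - p) t) k,
      Nat.sub_self]
  -- rewrite RHS sum
  have hRHS : ∑ p ∈ Finset.range k,
      (deriv (E p) t * φ (k - p) t
        + (deriv (φ p) t + 2 * deriv (E p) t * E 0 t) * E (k - p) t)
      = (∑ p ∈ Finset.range k, deriv (E p) t * φ (k - p) t)
        + (∑ p ∈ Finset.range k, deriv (φ p) t * E (k - p) t)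
        + 2 * E 0 t * ∑ p ∈ Finset.range k, deriv (E p) t * E (k - p) t := by
    rw [Finset.mul_sum, ← Finset.sum_add_distrib, ← Finset.sum_add_distrib]
    exact Finset.sum_congr rfl fun p _ => by ring
  rw [hRHS, hφ0]
  ring
end

section
/- Let f ∈ C^{2m+2}([x_i, x_{i+1}]) and let p be the unique polynomial of degree at most 2m+1 satisfying p^{(k)}(x_i) = f^{(k)}(x_i) and p^{(k)}(x_{i+1}) = f^{(k)}(x_{i+1}) for k = 0,…,m. Then for all x ∈ (x_i, x_{i+1}) and 0 ≤ k ≤ m+1, |f^{(k)}(x) − p^{(k)}(x)| ≤ ((x − x_i)(x_{i+1} − x))^{m+1−k} (Δx)^{k} / ((2m+2−2k)! k!) · ‖f^{(2m+2)}‖_{C⁰}, where Δx = x_{i+1} − x_i. -/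
open Polynomial Set

/-- Rolle applied between consecutive zeros in a sorted list. -/
lemma rolleList (g : ℝ → ℝ) (hg : Differentiable ℝ g) :
    ∀ (L : List ℝ) (t : ℝ), (t :: L).Pairwise (· < ·) → (∀ y ∈ t :: L, g y = 0) →
    ∃ L' : List ℝ, L'.Pairwise (· < ·) ∧ L'.length = L.length ∧
      ∀ y ∈ L', deriv g y = 0 ∧ ∃ u ∈ t :: L, u < y ∧ ∃ v ∈ t :: L, y < v := by
  intro L
  induction L with
  | nil => exact fun t _ _ => ⟨[], by simp, rfl, by simp⟩
  | cons t₂ rest ih =>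
    intro t hchain hzero
    have ht12 : t < t₂ := (List.pairwise_cons.1 hchain).1 t₂ (by simp)
    obtain ⟨η, hη, hdη⟩ := exists_deriv_eq_zero ht12 (hg.continuous.continuousOn)
      (by rw [hzero t (by simp), hzero t₂ (by simp)])
    obtain ⟨L'', hp'', hl'', hm''⟩ := ih t₂ (List.pairwise_cons.1 hchain).2
      (fun y hy => hzero y (List.mem_cons_of_mem _ hy))
    refine ⟨η :: L'', ?_, by simp [hl''], ?_⟩
    · refine List.pairwise_cons.2 ⟨?_, hp''⟩
      intro z hz
      obtain ⟨_, u, hu, huz, _⟩ := hm'' z hz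
      have : t₂ ≤ u := by
        rcases List.mem_cons.1 hu with h | h
        · exact h.symm.le
        · exact ((List.pairwise_cons.1 (List.pairwise_cons.1 hchain).2).1 u h).le
      exact lt_of_lt_of_le hη.2 (this.trans huz.le)
    · intro y hy
      rcases List.mem_cons.1 hy with rfl | hy
      · exact ⟨hdη, t, by simp, hη.1, t₂, by simp, hη.2⟩
      · obtain ⟨hz, u, hu, huz, v, hv, hvz⟩ := hm'' y hy
        exact ⟨hz, u, List.mem_cons_of_mem _ hu, huz, v, List.mem_cons_of_mem _ hv, hvz⟩

/-- Iterated Rolle for simple zeros. -/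
lemma simpleZeros (a b : ℝ) :
    ∀ (s : ℕ) (g : ℝ → ℝ), ContDiff ℝ (s : ℕ) g →
    ∀ L : List ℝ, L.Pairwise (· < ·) → L.length = s + 1 →
    (∀ y ∈ L, y ∈ Set.Icc a b ∧ g y = 0) →
    ∃ ξ ∈ Set.Icc a b, iteratedDeriv s g ξ = 0 := by
  intro s
  induction s with
  | zero =>
    intro g hg L hL hlen hz
    match L, hlen with
    | [t], _ =>
      obtain ⟨ht, hgt⟩ := hz t (by simp)
      exact ⟨t, ht, by simpa [iteratedDeriv_zero] using hgt⟩
  | succ s ih =>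
    intro g hg L hL hlen hz
    have hg' : ContDiff ℝ ((s : ℕ∞) : WithTop ℕ∞) (deriv g) := by
      have := hg
      rw [show ((s + 1 : ℕ) : WithTop ℕ∞) = (s : WithTop ℕ∞) + 1 by push_cast; ring] at this
      exact (contDiff_succ_iff_deriv.1 this).2.2
    have hgd : Differentiable ℝ g := by
      have := hg
      rw [show ((s + 1 : ℕ) : WithTop ℕ∞) = (s : WithTop ℕ∞) + 1 by push_cast; ring] at this
      exact (contDiff_succ_iff_deriv.1 this).1
    match L, hlen with
    | t :: rest, hlen =>
      obtain ⟨L', hp', hl', hm'⟩ := rolleList g hgd rest t hL (fun y hy => (hz y hy).2)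
      have hlen' : L'.length = s + 1 := by
        simpa [hl'] using Nat.succ_injective hlen
      have hz' : ∀ y ∈ L', y ∈ Set.Icc a b ∧ deriv g y = 0 := by
        intro y hy
        obtain ⟨hz0, u, hu, huy, v, hv, hyv⟩ := hm' y hy
        exact ⟨⟨(hz u hu).1.1.trans huy.le, hyv.le.trans (hz v hv).1.2⟩, hz0⟩
      obtain ⟨ξ, hξ, hξ0⟩ := ih (deriv g) hg' L' hp' hlen' hz'
      exact ⟨ξ, hξ, by rwa [iteratedDeriv_succ']⟩

/-- Generalized Rolle: zeros of multiplicity `r` at both endpoints and a sorted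
list of simple zeros inside. -/
lemma multiRolle (a b : ℝ) (hab : a < b) :
    ∀ (r n : ℕ) (g : ℝ → ℝ), ContDiff ℝ (n : ℕ) g →
    ∀ L : List ℝ, L.Pairwise (· < ·) →
    (∀ y ∈ L, y ∈ Set.Ioo a b ∧ g y = 0) →
    (∀ j < r, iteratedDeriv j g a = 0 ∧ iteratedDeriv j g b = 0) →
    L.length + 2 * r = n + 1 →
    ∃ ξ ∈ Set.Icc a b, iteratedDeriv n g ξ = 0 := by
  intro r
  induction r with
  | zero =>
    intro n g hg L hL hLz _ hlen
    exact simpleZeros a b n g hg L hL (by omega)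
      (fun y hy => ⟨⟨(hLz y hy).1.1.le, (hLz y hy).1.2.le⟩, (hLz y hy).2⟩)
  | succ r ih =>
    intro n g hg L hL hLz hend hlen
    obtain ⟨n', rfl⟩ : ∃ n', n = n' + 1 := ⟨L.length + 2 * r, by omega⟩
    have hg0 : ∀ y ∈ a :: (L ++ [b]), g y = 0 := by
      intro y hy
      rcases List.mem_cons.1 hy with rfl | hy
      · simpa [iteratedDeriv_zero] using (hend 0 (by omega)).1
      · rcases List.mem_append.1 hy with hy | hy
        · exact (hLz y hy).2
        · simp only [List.mem_singleton] at hy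
          subst hy
          simpa [iteratedDeriv_zero] using (hend 0 (by omega)).2
    have hfull : (a :: (L ++ [b])).Pairwise (· < ·) := by
      refine List.pairwise_cons.2 ⟨?_, ?_⟩
      · intro z hz
        rcases List.mem_append.1 hz with hz | hz
        · exact (hLz z hz).1.1
        · simp only [List.mem_singleton] at hz; subst hz; exact hab
      · refine List.pairwise_append.2 ⟨hL, by simp, ?_⟩
        intro u hu v hv
        simp only [List.mem_singleton] at hv; subst hv
        exact (hLz u hu).1.2
    have hgd : Differentiable ℝ g := by
      have := hg
      rw [show ((n' + 1 : ℕ) : WithTop ℕ∞) = (n' : WithTop ℕ∞) + 1 by push_cast; ring] at this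
      exact (contDiff_succ_iff_deriv.1 this).1
    have hg' : ContDiff ℝ (n' : ℕ) (deriv g) := by
      have := hg
      rw [show ((n' + 1 : ℕ) : WithTop ℕ∞) = (n' : WithTop ℕ∞) + 1 by push_cast; ring] at this
      exact (contDiff_succ_iff_deriv.1 this).2.2
    obtain ⟨L', hp', hl', hm'⟩ := rolleList g hgd (L ++ [b]) a hfull hg0
    have hIoo : ∀ y ∈ L', y ∈ Set.Ioo a b ∧ deriv g y = 0 := by
      intro y hy
      obtain ⟨hz0, u, hu, huy, v, hv, hyv⟩ := hm' y hy
      have hua : a ≤ u := by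
        rcases List.mem_cons.1 hu with rfl | hu
        · rfl
        · rcases List.mem_append.1 hu with h | h
          · exact (hLz u h).1.1.le
          · simp only [List.mem_singleton] at h; subst h; exact hab.le
      have hvb : v ≤ b := by
        rcases List.mem_cons.1 hv with rfl | hv
        · exact hab.le
        · rcases List.mem_append.1 hv with h | h
          · exact (hLz v h).1.2.le
          · simp only [List.mem_singleton] at h; exact h.le
      exact ⟨⟨lt_of_le_of_lt hua huy, lt_of_lt_of_le hyv hvb⟩, hz0⟩
    have hend' : ∀ j < r, iteratedDeriv j (deriv g) a = 0 ∧ iteratedDeriv j (deriv g) b = 0 := by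
      intro j hj
      rw [← iteratedDeriv_succ']
      exact hend (j + 1) (by omega)
    obtain ⟨ξ, hξ, hξ0⟩ := ih n' (deriv g) hg' L' hp' hIoo hend' (by simp at hl' ⊢; omega)
    exact ⟨ξ, hξ, by rwa [iteratedDeriv_succ']⟩

lemma iteratedDeriv_polyeval (q : Polynomial ℝ) :
    ∀ j : ℕ, iteratedDeriv j (fun s => q.eval s) = fun t => (Polynomial.derivative^[j] q).eval t := by
  intro j
  induction j with
  | zero => simp [iteratedDeriv_zero]
  | succ j ih =>
    funext t
    rw [iteratedDeriv_succ, ih, Function.iterate_succ_apply']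
    exact Polynomial.deriv (p := Polynomial.derivative^[j] q)

/-- A polynomial divisible by `(X - C a) ^ r` has vanishing derivatives at `a` below order `r`. -/
lemma poly_root_mult : ∀ (j r : ℕ) (q : Polynomial ℝ) (a : ℝ), j < r →
    (Polynomial.X - Polynomial.C a) ^ r ∣ q → (Polynomial.derivative^[j] q).eval a = 0 := by
  intro j
  induction j with
  | zero =>
    intro r q a hr hdvd
    obtain ⟨s, rfl⟩ := hdvd
    simp [Polynomial.eval_pow, zero_pow (by omega : r ≠ 0)]
  | succ j ih =>
    intro r q a hr hdvd
    obtain ⟨s, rfl⟩ := hdvd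
    rw [Function.iterate_succ_apply]
    refine ih (r - 1) _ a (by omega) ?_
    rw [Polynomial.derivative_mul, Polynomial.derivative_pow]
    exact dvd_add (Dvd.dvd.mul_right (Dvd.dvd.mul_right (dvd_mul_left _ _) _) _)
      (Dvd.dvd.mul_right (pow_dvd_pow _ (by omega)) _)

lemma iteratedDeriv_sub_aux {n : ℕ} {F G : ℝ → ℝ} (hF : ContDiff ℝ (n : ℕ) F)
    (hG : ContDiff ℝ (n : ℕ) G) :
    ∀ j ≤ n, ∀ t, iteratedDeriv j (fun s => F s - G s) t = iteratedDeriv j F t - iteratedDeriv j G t := by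
  intro j
  induction j with
  | zero => simp [iteratedDeriv_zero]
  | succ j ih =>
    intro hj t
    have hFd : DifferentiableAt ℝ (iteratedDeriv j F) t :=
      (hF.differentiable_iteratedDeriv j (by exact_mod_cast Nat.lt_of_lt_of_le (Nat.lt_succ_self j) hj)).differentiableAt
    have hGd : DifferentiableAt ℝ (iteratedDeriv j G) t :=
      (hG.differentiable_iteratedDeriv j (by exact_mod_cast Nat.lt_of_lt_of_le (Nat.lt_succ_self j) hj)).differentiableAt
    rw [iteratedDeriv_succ, iteratedDeriv_succ, iteratedDeriv_succ]
    have : iteratedDeriv j (fun s => F s - G s) = fun s => iteratedDeriv j F s - iteratedDeriv j G s :=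
      funext (ih (by omega))
    rw [this, deriv_fun_sub hFd hGd]

lemma monic_prod_roots (L : List ℝ) :
    ((L.map fun ξ => Polynomial.X - Polynomial.C ξ).prod).Monic ∧
    ((L.map fun ξ => Polynomial.X - Polynomial.C ξ).prod).natDegree = L.length := by
  induction L with
  | nil => simpa using Polynomial.monic_one
  | cons t rest ih =>
    simp only [List.map_cons, List.prod_cons, List.length_cons]
    refine ⟨(Polynomial.monic_X_sub_C t).mul ih.1, ?_⟩
    rw [(Polynomial.monic_X_sub_C t).natDegree_mul ih.1, Polynomial.natDegree_X_sub_C, ih.2]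
    omega

lemma abs_prod_le (a b : ℝ) (hab : a ≤ b) (x : ℝ) (hx : x ∈ Set.Icc a b) :
    ∀ L : List ℝ, (∀ ξ ∈ L, ξ ∈ Set.Icc a b) →
    |(L.map fun ξ => x - ξ).prod| ≤ (b - a) ^ L.length := by
  intro L
  induction L with
  | nil => simp
  | cons t rest ih =>
    intro hmem
    simp only [List.map_cons, List.prod_cons, List.length_cons, abs_mul]
    have h1 : |x - t| ≤ b - a := by
      have := hmem t (by simp)
      rw [abs_le]; constructor <;> [nlinarith [hx.1, hx.2, this.1, this.2]; nlinarith [hx.1, hx.2, this.1, this.2]]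
    calc |x - t| * |(rest.map fun ξ => x - ξ).prod| ≤ (b - a) * (b - a) ^ rest.length :=
          mul_le_mul h1 (ih fun ξ hξ => hmem ξ (by simp [hξ])) (abs_nonneg _) (by linarith)
      _ = (b - a) ^ (rest.length + 1) := (pow_succ' _ _).symm

lemma poly_contDiff (q : Polynomial ℝ) {n : WithTop ℕ∞} : ContDiff ℝ n (fun s => q.eval s) := by
  induction q using Polynomial.induction_on' with
  | add p q hp hq => simpa [Polynomial.eval_add] using hp.add hq
  | monomial i a =>
    simpa [Polynomial.eval_monomial] using contDiff_const.mul ((contDiff_id (𝕜 := ℝ)).pow i)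

lemma iteratedDeriv_cmul_poly (c : ℝ) (q : Polynomial ℝ) (j : ℕ) :
    iteratedDeriv j (fun s => c * q.eval s) = fun t => c * (Polynomial.derivative^[j] q).eval t := by
  have h : (fun s => c * q.eval s) = fun s => (Polynomial.C c * q).eval s := by
    funext s; simp
  rw [h, iteratedDeriv_polyeval]
  funext t
  rw [Polynomial.iterate_derivative_C_mul]
  simp

theorem stmt_10 (m : ℕ) (xi xip : ℝ) (hx : xi < xip)
    (f : ℝ → ℝ) (hf : ContDiff ℝ (2 * m + 2 : ℕ) f)
    (p : Polynomial ℝ) (hdeg : p.natDegree ≤ 2 * m + 1)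
    (hmatchl : ∀ k ≤ m, iteratedDeriv k f xi = (Polynomial.derivative^[k] p).eval xi)
    (hmatchr : ∀ k ≤ m, iteratedDeriv k f xip = (Polynomial.derivative^[k] p).eval xip) :
    ∀ x ∈ Set.Ioo xi xip, ∀ k ≤ m + 1,
      |iteratedDeriv k f x - (Polynomial.derivative^[k] p).eval x|
        ≤ ((x - xi) * (xip - x)) ^ (m + 1 - k) * (xip - xi) ^ k /
            ((Nat.factorial (2 * m + 2 - 2 * k) : ℝ) * (Nat.factorial k : ℝ)) *
          sSup ((fun y => |iteratedDeriv (2 * m + 2) f y|) '' Set.Icc xi xip) := by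
  intro x hxm k hk
  obtain ⟨hx1, hx2⟩ := hxm
  -- the error function and its derivatives
  set E : ℝ → ℝ := fun t => f t - p.eval t with hEdef
  have hE : ContDiff ℝ ((2 * m + 2 : ℕ)) E := hf.sub (poly_contDiff p)
  have iedE : ∀ j ≤ 2 * m + 2, ∀ t,
      iteratedDeriv j E t = iteratedDeriv j f t - (Polynomial.derivative^[j] p).eval t := by
    intro j hj t
    rw [hEdef]
    rw [iteratedDeriv_sub_aux hf (poly_contDiff p) j hj t, iteratedDeriv_polyeval]
  have hEl : ∀ j ≤ m, iteratedDeriv j E xi = 0 := by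
    intro j hj
    rw [iedE j (by omega), hmatchl j hj, sub_self]
  have hEr : ∀ j ≤ m, iteratedDeriv j E xip = 0 := by
    intro j hj
    rw [iedE j (by omega), hmatchr j hj, sub_self]
  -- stage 1 : k distinct interior zeros of the k-th derivative of E
  have stage1 : ∀ k, k ≤ m + 1 → ∃ L : List ℝ, L.Pairwise (· < ·) ∧ L.length = k ∧
      ∀ y ∈ L, y ∈ Set.Ioo xi xip ∧ iteratedDeriv k E y = 0 := by
    intro k
    induction k with
    | zero => exact fun _ => ⟨[], by simp, rfl, by simp⟩
    | succ k ih =>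
      intro hk1
      obtain ⟨L, hL, hLlen, hLmem⟩ := ih (by omega)
      have hkm : k ≤ m := by omega
      have hgd : Differentiable ℝ (iteratedDeriv k E) :=
        hE.differentiable_iteratedDeriv k (by exact_mod_cast (by omega : k < 2 * m + 2))
      have hfull : (xi :: (L ++ [xip])).Pairwise (· < ·) := by
        refine List.pairwise_cons.2 ⟨?_, ?_⟩
        · intro z hz
          rcases List.mem_append.1 hz with hz | hz
          · exact (hLmem z hz).1.1
          · simp only [List.mem_singleton] at hz; subst hz; exact hx
        · refine List.pairwise_append.2 ⟨hL, by simp, ?_⟩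
          intro u hu v hv
          simp only [List.mem_singleton] at hv; subst hv
          exact (hLmem u hu).1.2
      have hg0 : ∀ y ∈ xi :: (L ++ [xip]), iteratedDeriv k E y = 0 := by
        intro y hy
        rcases List.mem_cons.1 hy with rfl | hy
        · exact hEl k hkm
        · rcases List.mem_append.1 hy with hy | hy
          · exact (hLmem y hy).2
          · simp only [List.mem_singleton] at hy; subst hy; exact hEr k hkm
      obtain ⟨L', hp', hl', hm'⟩ := rolleList _ hgd (L ++ [xip]) xi hfull hg0
      refine ⟨L', hp', by simp at hl'; omega, ?_⟩
      intro y hy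
      obtain ⟨hz0, u, hu, huy, v, hv, hyv⟩ := hm' y hy
      have hua : xi ≤ u := by
        rcases List.mem_cons.1 hu with rfl | hu
        · rfl
        · rcases List.mem_append.1 hu with h | h
          · exact (hLmem u h).1.1.le
          · simp only [List.mem_singleton] at h; subst h; exact hx.le
      have hvb : v ≤ xip := by
        rcases List.mem_cons.1 hv with rfl | hv
        · exact hx.le
        · rcases List.mem_append.1 hv with h | h
          · exact (hLmem v h).1.2.le
          · simp only [List.mem_singleton] at h; exact h.le
      refine ⟨⟨lt_of_le_of_lt hua huy, lt_of_lt_of_le hyv hvb⟩, ?_⟩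
      rw [iteratedDeriv_succ]
      exact hz0
  -- sup norm facts
  set M : ℝ := sSup ((fun y => |iteratedDeriv (2 * m + 2) f y|) '' Set.Icc xi xip) with hMdef
  have hcont : Continuous (iteratedDeriv (2 * m + 2) f) := hf.continuous_iteratedDeriv _ le_rfl
  have hbdd : BddAbove ((fun y => |iteratedDeriv (2 * m + 2) f y|) '' Set.Icc xi xip) :=
    (isCompact_Icc.image (continuous_abs.comp hcont)).bddAbove
  have hMge : ∀ y ∈ Set.Icc xi xip, |iteratedDeriv (2 * m + 2) f y| ≤ M :=
    fun y hy => le_csSup hbdd ⟨y, hy, rfl⟩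
  have hM0 : 0 ≤ M := le_trans (abs_nonneg _) (hMge xi ⟨le_rfl, hx.le⟩)
  have hP0 : (0 : ℝ) ≤ ((x - xi) * (xip - x)) ^ (m + 1 - k) :=
    pow_nonneg (mul_nonneg (by linarith) (by linarith)) _
  have hQ0 : (0 : ℝ) ≤ (xip - xi) ^ k := pow_nonneg (by linarith) _
  have hDf0 : (0 : ℝ) < (Nat.factorial (2 * m + 2 - 2 * k) : ℝ) * (Nat.factorial k : ℝ) := by
    positivity
  have hRHS0 : 0 ≤ ((x - xi) * (xip - x)) ^ (m + 1 - k) * (xip - xi) ^ k /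
      ((Nat.factorial (2 * m + 2 - 2 * k) : ℝ) * (Nat.factorial k : ℝ)) * M :=
    mul_nonneg (div_nonneg (mul_nonneg hP0 hQ0) hDf0.le) hM0
  rw [show iteratedDeriv k f x - (Polynomial.derivative^[k] p).eval x = iteratedDeriv k E x from
    (iedE k (by omega) x).symm]
  by_cases hek : iteratedDeriv k E x = 0
  · rw [hek, abs_zero]; exact hRHS0
  -- the nontrivial case
  obtain ⟨L, hL, hLlen, hLmem⟩ := stage1 k hk
  have hxL : x ∉ L := fun h => hek (hLmem x h).2
  set r : ℕ := m + 1 - k with hrdef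
  set n : ℕ := 2 * m + 2 - k with hndef
  set W : Polynomial ℝ := ((Polynomial.X - Polynomial.C xi) * (Polynomial.C xip - Polynomial.X)) ^ r
      * (L.map fun ξ => Polynomial.X - Polynomial.C ξ).prod with hWdef
  have hWeval : ∀ t, W.eval t = ((t - xi) * (xip - t)) ^ r * (L.map fun ξ => t - ξ).prod := by
    intro t
    simp [hWdef, Polynomial.eval_list_prod, List.map_map, Function.comp_def]
  have hprodne : (L.map fun ξ => x - ξ).prod ≠ 0 := by
    refine List.prod_ne_zero ?_
    intro h0
    obtain ⟨ξ, hξ, hξ0⟩ := List.mem_map.1 h0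
    have hξx : ξ = x := (sub_eq_zero.1 hξ0).symm
    exact hxL (hξx ▸ hξ)
  have hWxne : W.eval x ≠ 0 := by
    rw [hWeval]
    exact mul_ne_zero (pow_ne_zero _ (mul_ne_zero (by linarith) (by linarith))) hprodne
  set c : ℝ := iteratedDeriv k E x / W.eval x with hcdef
  set g : ℝ → ℝ := fun t => iteratedDeriv k E t - c * W.eval t with hgdef
  have hEk : ContDiff ℝ (n : ℕ) (iteratedDeriv k E) := by
    rw [iteratedDeriv_eq_iterate]
    refine ContDiff.iterate_deriv' n k ?_
    rw [show n + k = 2 * m + 2 by omega]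
    exact hE
  have hgc : ContDiff ℝ (n : ℕ) g := hEk.sub (contDiff_const.mul (poly_contDiff W))
  -- expansion of iterated derivatives of g
  have hgexp : ∀ j ≤ n, ∀ t, iteratedDeriv j g t =
      iteratedDeriv j (iteratedDeriv k E) t - c * (Polynomial.derivative^[j] W).eval t := by
    intro j hj t
    rw [hgdef]
    rw [iteratedDeriv_sub_aux hEk (contDiff_const.mul (poly_contDiff W)) j hj t,
      iteratedDeriv_cmul_poly]
  have hIadd : ∀ j t, iteratedDeriv j (iteratedDeriv k E) t = iteratedDeriv (j + k) E t := by
    intro j t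
    rw [iteratedDeriv_eq_iterate, iteratedDeriv_eq_iterate, iteratedDeriv_eq_iterate,
      Function.iterate_add_apply]
  -- the combined zero list
  set Lx : List ℝ := L.filter (fun y => y < x) ++ x :: L.filter (fun y => x < y) with hLxdef
  have hLxmem : ∀ y ∈ Lx, y = x ∨ y ∈ L := by
    intro y hy
    rcases List.mem_append.1 hy with hy | hy
    · exact Or.inr (List.mem_of_mem_filter hy)
    · rcases List.mem_cons.1 hy with rfl | hy
      · exact Or.inl rfl
      · exact Or.inr (List.mem_of_mem_filter hy)
  have hLxpair : Lx.Pairwise (· < ·) := by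
    refine List.pairwise_append.2 ⟨hL.filter _, ?_, ?_⟩
    · refine List.pairwise_cons.2 ⟨?_, hL.filter _⟩
      intro z hz
      have := List.of_mem_filter hz
      simpa using this
    · intro u hu v hv
      have hux : u < x := by simpa using List.of_mem_filter hu
      rcases List.mem_cons.1 hv with rfl | hv
      · exact hux
      · have : x < v := by simpa using List.of_mem_filter hv
        exact hux.trans this
  have hLxlen : Lx.length = k + 1 := by
    have h1 := (List.filter_append_perm (fun y => decide (y < x)) L).length_eq
    have h2 : L.filter (fun y => !decide (y < x)) = L.filter (fun y => decide (x < y)) := by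
      refine List.filter_congr ?_
      intro y hy
      have hyx : y ≠ x := fun h => hxL (h ▸ hy)
      rw [← decide_not, decide_eq_decide]
      constructor
      · intro h; exact lt_of_le_of_ne (not_lt.1 h) (Ne.symm hyx)
      · intro h; exact not_lt.2 h.le
    rw [h2] at h1
    simp only [hLxdef, List.length_append, List.length_cons]
    simp only [List.length_append] at h1
    omega
  have hLxzero : ∀ y ∈ Lx, y ∈ Set.Ioo xi xip ∧ g y = 0 := by
    intro y hy
    rcases hLxmem y hy with rfl | hy
    · refine ⟨⟨hx1, hx2⟩, ?_⟩
      rw [hgdef]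
      simp only [hcdef]
      rw [div_mul_cancel₀ _ hWxne, sub_self]
    · refine ⟨(hLmem y hy).1, ?_⟩
      rw [hgdef]
      have hWy : W.eval y = 0 := by
        rw [hWeval]
        refine mul_eq_zero_of_right _ (List.prod_eq_zero ?_)
        exact List.mem_map.2 ⟨y, hy, sub_self y⟩
      show iteratedDeriv k E y - c * W.eval y = 0
      rw [(hLmem y hy).2, hWy]
      ring
  have hXdvd : (Polynomial.X - Polynomial.C xi) ^ r ∣ W := by
    refine ⟨(Polynomial.C xip - Polynomial.X) ^ r * (L.map fun ξ => Polynomial.X - Polynomial.C ξ).prod, ?_⟩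
    rw [hWdef, mul_pow]; ring
  have hXdvd' : (Polynomial.X - Polynomial.C xip) ^ r ∣ W := by
    refine ⟨(-1 : Polynomial ℝ) ^ r * (Polynomial.X - Polynomial.C xi) ^ r *
      (L.map fun ξ => Polynomial.X - Polynomial.C ξ).prod, ?_⟩
    have hBneg : (Polynomial.C xip - Polynomial.X : Polynomial ℝ) = -(Polynomial.X - Polynomial.C xip) := by ring
    rw [hWdef, mul_pow, hBneg, neg_pow]
    ring
  have hgend : ∀ j < r, iteratedDeriv j g xi = 0 ∧ iteratedDeriv j g xip = 0 := by
    intro j hj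
    have hjn : j ≤ n := by omega
    constructor
    · rw [hgexp j hjn, hIadd, hEl (j + k) (by omega), poly_root_mult j r W xi hj hXdvd]
      ring
    · rw [hgexp j hjn, hIadd, hEr (j + k) (by omega), poly_root_mult j r W xip hj hXdvd']
      ring
  obtain ⟨ξ, hξIcc, hξ0⟩ := multiRolle xi xip hx r n g hgc Lx hLxpair hLxzero hgend (by omega)
  -- compute the top derivative of W
  have hprodmonic := monic_prod_roots L
  have hABne : ((Polynomial.X - Polynomial.C xi) * (Polynomial.C xip - Polynomial.X) : Polynomial ℝ) ≠ 0 := by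
    have : (Polynomial.C xip - Polynomial.X : Polynomial ℝ) = -(Polynomial.X - Polynomial.C xip) := by ring
    rw [this]
    exact mul_ne_zero (Polynomial.X_sub_C_ne_zero xi) (neg_ne_zero.2 (Polynomial.X_sub_C_ne_zero xip))
  have hABdeg : ((Polynomial.X - Polynomial.C xi) * (Polynomial.C xip - Polynomial.X) : Polynomial ℝ).natDegree = 2 := by
    have h : (Polynomial.C xip - Polynomial.X : Polynomial ℝ) = -(Polynomial.X - Polynomial.C xip) := by ring
    rw [Polynomial.natDegree_mul (Polynomial.X_sub_C_ne_zero xi)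
      (by rw [h]; exact neg_ne_zero.2 (Polynomial.X_sub_C_ne_zero xip)), h,
      Polynomial.natDegree_neg, Polynomial.natDegree_X_sub_C, Polynomial.natDegree_X_sub_C]
  have hABlead : ((Polynomial.X - Polynomial.C xi) * (Polynomial.C xip - Polynomial.X) : Polynomial ℝ).leadingCoeff = -1 := by
    have h : (Polynomial.C xip - Polynomial.X : Polynomial ℝ) = -(Polynomial.X - Polynomial.C xip) := by ring
    rw [Polynomial.leadingCoeff_mul, h, Polynomial.leadingCoeff_neg,
      (Polynomial.monic_X_sub_C xi).leadingCoeff, (Polynomial.monic_X_sub_C xip).leadingCoeff]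
    ring
  have hWdeg : W.natDegree = n := by
    rw [hWdef, Polynomial.natDegree_mul (pow_ne_zero _ hABne) hprodmonic.1.ne_zero,
      Polynomial.natDegree_pow, hABdeg, hprodmonic.2, hLlen]
    omega
  have hWlead : W.leadingCoeff = (-1) ^ r := by
    rw [hWdef, Polynomial.leadingCoeff_mul, Polynomial.leadingCoeff_pow, hABlead,
      hprodmonic.1.leadingCoeff, mul_one]
  have hWn : Polynomial.derivative^[n] W = Polynomial.C ((Nat.factorial n : ℝ) * (-1) ^ r) := by
    have h1 : (Polynomial.derivative^[n] W).natDegree = 0 := by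
      have := Polynomial.natDegree_iterate_derivative W n
      omega
    have h2 := Polynomial.eq_C_of_natDegree_le_zero (le_of_eq h1)
    rw [h2, Polynomial.coeff_iterate_derivative]
    congr 1
    rw [zero_add, Nat.descFactorial_self]
    rw [show W.coeff n = W.leadingCoeff by rw [Polynomial.leadingCoeff, hWdeg], hWlead]
    simp [nsmul_eq_mul]
  -- extract the mean value identity
  have hkey : iteratedDeriv (2 * m + 2) f ξ = c * ((Nat.factorial n : ℝ) * (-1) ^ r) := by
    have h1 := hgexp n le_rfl ξ
    rw [hξ0, hIadd, show n + k = 2 * m + 2 by omega, iedE (2 * m + 2) le_rfl ξ,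
      Polynomial.iterate_derivative_eq_zero (by omega : p.natDegree < 2 * m + 2), hWn] at h1
    simp only [Polynomial.eval_zero, Polynomial.eval_C, sub_zero] at h1
    linarith [h1]
  have hcabs : |c| * (Nat.factorial n : ℝ) ≤ M := by
    have hMξ := hMge ξ hξIcc
    rw [hkey] at hMξ
    calc |c| * (Nat.factorial n : ℝ) = |c * ((Nat.factorial n : ℝ) * (-1) ^ r)| := by
          rw [abs_mul, abs_mul, abs_pow, abs_neg, abs_one, one_pow, mul_one, Nat.abs_cast]
      _ ≤ M := hMξ
  have hekx : iteratedDeriv k E x = c * W.eval x := (div_mul_cancel₀ _ hWxne).symm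
  have hWxabs : |W.eval x| ≤ ((x - xi) * (xip - x)) ^ r * (xip - xi) ^ k := by
    rw [hWeval, abs_mul, abs_of_nonneg hP0]
    refine mul_le_mul_of_nonneg_left ?_ hP0
    have h := abs_prod_le xi xip hx.le x ⟨hx1.le, hx2.le⟩ L
      (fun ζ hζ => ⟨(hLmem ζ hζ).1.1.le, (hLmem ζ hζ).1.2.le⟩)
    rwa [hLlen] at h
  have hNf0 : (0:ℝ) < (Nat.factorial n : ℝ) := by positivity
  have hDN : (Nat.factorial (2*m+2-2*k) : ℝ) * (Nat.factorial k : ℝ) ≤ (Nat.factorial n : ℝ) := by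
    have hd : Nat.factorial (2*m+2-2*k) * Nat.factorial k ∣ Nat.factorial n := by
      have he : (2*m+2-2*k) + k = n := by omega
      exact he ▸ Nat.factorial_mul_factorial_dvd_factorial_add _ _
    exact_mod_cast Nat.le_of_dvd (Nat.factorial_pos n) hd
  calc |iteratedDeriv k E x| = |c| * |W.eval x| := by rw [hekx, abs_mul]
    _ ≤ (M / (Nat.factorial n : ℝ)) * (((x - xi) * (xip - x)) ^ r * (xip - xi) ^ k) := by
        refine mul_le_mul ?_ hWxabs (abs_nonneg _) (by positivity)
        rw [le_div_iff₀ hNf0]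
        exact hcabs
    _ = ((x - xi) * (xip - x)) ^ r * (xip - xi) ^ k / (Nat.factorial n : ℝ) * M := by ring
    _ ≤ ((x - xi) * (xip - x)) ^ r * (xip - xi) ^ k /
          ((Nat.factorial (2 * m + 2 - 2 * k) : ℝ) * (Nat.factorial k : ℝ)) * M := by
        refine mul_le_mul_of_nonneg_right ?_ hM0
        exact div_le_div_of_nonneg_left (mul_nonneg hP0 hQ0) hDf0 hDN
end
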